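/- The five boxes, each of size (2/3, 1/2, 1/2), admit no orthogonal packing into the unit cube [0,1]^3 (even though their total volume is 5/6 ≤ 1); consequently, the optimal value of the corresponding three-dimensional orthogonal bin packing instance with unit-cube bins is 2. -/

import Mathlib

/-- `p` is an orthogonal packing of the boxes `w` into the unit cube `[0,1]^d`. -/
def IsOrthogonalPacking {n d : ℕ} (w p : Fin n → Fin d → ℝ) : Prop :=
  (∀ b i, 0 ≤ p b i ∧ p b i + w b i ≤ 1) ∧
  ∀ b c : Fin n, b ≠ c → ∃ i, p b i + w b i ≤ p c i ∨ p c i + w c i ≤ p b i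

/-- The boxes `w` can be partitioned into `m` unit-cube bins, each part admitting
an orthogonal packing. -/
def CanBinPack {n d : ℕ} (w : Fin n → Fin d → ℝ) (m : ℕ) : Prop :=
  ∃ f : Fin n → Fin m, ∀ j : Fin m, ∃ p : Fin n → Fin d → ℝ,
    (∀ b, f b = j → ∀ i, 0 ≤ p b i ∧ p b i + w b i ≤ 1) ∧
    ∀ b c : Fin n, f b = j → f c = j → b ≠ c →
      ∃ i, p b i + w b i ≤ p c i ∨ p c i + w c i ≤ p b i

/-- Five boxes of size `(2/3,1/2,1/2)` cannot be orthogonally packed into `[0,1]³`. -/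
lemma no_pack_five (p : Fin 5 → Fin 3 → ℝ)
    (h : IsOrthogonalPacking (fun _ => ![(2:ℝ)/3, 1/2, 1/2]) p) : False := by
  obtain ⟨hbd, hsep⟩ := h
  obtain ⟨b, c, hbc, hs⟩ := Fintype.exists_ne_map_eq_of_card_lt
    (fun b : Fin 5 => ((decide (p b 1 < 1/4), decide (p b 2 < 1/4)) : Bool × Bool))
    (by simp)
  have hs1 : (p b 1 < 1/4) ↔ (p c 1 < 1/4) := by
    have := congrArg Prod.fst hs; simpa [decide_eq_decide] using this
  have hs2 : (p b 2 < 1/4) ↔ (p c 2 < 1/4) := by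
    have := congrArg Prod.snd hs; simpa [decide_eq_decide] using this
  obtain ⟨i, hi⟩ := hsep b c hbc
  have hb0 := hbd b 0; have hc0 := hbd c 0
  have hb1 := hbd b 1; have hc1 := hbd c 1
  have hb2 := hbd b 2; have hc2 := hbd c 2
  simp at hb0 hc0 hb1 hc1 hb2 hc2
  fin_cases i <;> simp at hi
  · rcases hi with h | h <;> linarith
  · rcases hi with h | h
    · have h1 : p b 1 < 1/4 := by linarith
      have := hs1.mp h1; linarith
    · have h1 : p c 1 < 1/4 := by linarith
      have := hs1.mpr h1; linarith
  · rcases hi with h | h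
    · have h1 : p b 2 < 1/4 := by linarith
      have := hs2.mp h1; linarith
    · have h1 : p c 2 < 1/4 := by linarith
      have := hs2.mpr h1; linarith

/-- Bin assignment: boxes 0,2,4 in bin 0; boxes 1,3 in bin 1. -/
def fiveBoxBin : Fin 5 → Fin 2 := ![0, 1, 0, 1, 0]

/-- Positions of the five boxes (valid within each bin). -/
noncomputable def fiveBoxPos : Fin 5 → Fin 3 → ℝ :=
  ![![0, 0, 0], ![0, 0, 0], ![0, 1/2, 0], ![0, 1/2, 0], ![0, 1/2, 1/2]]

lemma canpack2 : CanBinPack (fun (_ : Fin 5) => ![(2:ℝ)/3, 1/2, 1/2]) 2 := by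
  refine ⟨fiveBoxBin, fun j => ⟨fiveBoxPos, ?_, ?_⟩⟩
  · intro b _ i
    fin_cases b <;> fin_cases i <;> norm_num [fiveBoxPos]
  · intro b c hbj hcj hbc
    fin_cases b <;> fin_cases c <;>
      first
        | exact absurd rfl hbc
        | (refine ⟨1, ?_⟩; norm_num [fiveBoxPos]; done)
        | (refine ⟨2, ?_⟩; norm_num [fiveBoxPos, Matrix.cons_val_two]; done)
        | (subst hbj; simp [fiveBoxBin] at hcj; done)

/-- Five boxes of size `(2/3, 1/2, 1/2)` admit no orthogonal packing into the unit cube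
`[0,1]³` — even though their total volume is `5/6 ≤ 1` — and the optimal value of the
corresponding three-dimensional orthogonal bin packing instance with unit-cube bins
is `2`. -/
theorem five_boxes_need_two_bins :
    (∑ b : Fin 5, ∏ i : Fin 3, (fun (_ : Fin 5) => ![(2:ℝ)/3, 1/2, 1/2]) b i = 5 / 6) ∧
    (¬ ∃ p : Fin 5 → Fin 3 → ℝ,
        IsOrthogonalPacking (fun _ => ![2/3, 1/2, 1/2]) p) ∧
    IsLeast {m : ℕ | CanBinPack (fun (_ : Fin 5) => ![(2:ℝ)/3, 1/2, 1/2]) m} 2 := by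
  refine ⟨?_, ?_, ?_, ?_⟩
  · norm_num [Fin.sum_univ_five, Fin.prod_univ_three, Matrix.cons_val_two]
  · rintro ⟨p, hp⟩
    exact no_pack_five p hp
  · exact canpack2
  · intro m hm
    by_contra hlt
    push_neg at hlt
    interval_cases m
    · obtain ⟨f, -⟩ := hm
      exact (f 0).elim0
    · obtain ⟨f, hf⟩ := hm
      obtain ⟨p, hp1, hp2⟩ := hf 0
      refine no_pack_five p ⟨fun b i => hp1 b (Subsingleton.elim _ _) i,
        fun b c hbc => hp2 b c (Subsingleton.elim _ _) (Subsingleton.elim _ _) hbc⟩
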